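/- arXiv:2405.09970 — 2 statements merged into one kernel-verified Lean document; each statement's English description precedes it below -/
import Mathlib

section
/- In the cut-free calculus GwIKt†, the left black-diamond rule is height-preserving invertible: for all n ≥ 1, if Γ[◆α] ⇒ β is derivable with height n, then Γ[•α] ⇒ β is derivable with height at most n. -/
/-- Formulas of weak intuitionistic tense logic. -/
inductive Fml : Type
  | var : ℕ → Fml
  | top : Fml
  | bot : Fml
  | imp : Fml → Fml → Fml
  | and : Fml → Fml → Fml
  | or  : Fml → Fml → Fml
  | dia : Fml → Fml   -- ◇ (future diamond)
  | box : Fml → Fml   -- □ (future box)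
  | bdia : Fml → Fml  -- ◆ (past diamond)
  | bbox : Fml → Fml  -- ■ (past box)

/-- Atomic formulas: variables, ⊤, ⊥. -/
def Fml.Atomic : Fml → Prop
  | .var _ => True
  | .top => True
  | .bot => True
  | _ => False

/-- Formula structures: formulas closed under comma, ∘, •. -/
inductive FS : Type
  | fml : Fml → FS
  | comma : FS → FS → FS
  | circ : FS → FS    -- ∘, structural ◇
  | bullet : FS → FS  -- •, structural ◆

/-- Single-hole contexts. -/
inductive Ctx : Type
  | hole : Ctx
  | commaL : Ctx → FS → Ctx
  | commaR : FS → Ctx → Ctx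
  | circ : Ctx → Ctx
  | bullet : Ctx → Ctx

/-- Fill the hole of a context with a structure. -/
def Ctx.plug : Ctx → FS → FS
  | .hole, Δ => Δ
  | .commaL C Γ, Δ => .comma (C.plug Δ) Γ
  | .commaR Γ C, Δ => .comma Γ (C.plug Δ)
  | .circ C, Δ => .circ (C.plug Δ)
  | .bullet C, Δ => .bullet (C.plug Δ)

/-- Multi-hole contexts (for the mix rules Γ[·]ⁿ). -/
inductive MCtx : Type
  | hole : MCtx
  | fml : Fml → MCtx
  | comma : MCtx → MCtx → MCtx
  | circ : MCtx → MCtx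
  | bullet : MCtx → MCtx

/-- Fill all holes of a multi-context with the same structure. -/
def MCtx.plug : MCtx → FS → FS
  | .hole, Δ => Δ
  | .fml α, _ => .fml α
  | .comma C D, Δ => .comma (C.plug Δ) (D.plug Δ)
  | .circ C, Δ => .circ (C.plug Δ)
  | .bullet C, Δ => .bullet (C.plug Δ)

/-- Number n of designated occurrences in Γ[·]ⁿ. -/
def MCtx.holes : MCtx → ℕ
  | .hole => 1
  | .fml _ => 0
  | .comma C D => C.holes + D.holes
  | .circ C => C.holes
  | .bullet C => C.holes

/-- Cut formulas allowed in (Cut_*): not atomic, not □- or ■-formulas, not implications. -/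
def Fml.Starish (α : Fml) : Prop :=
  ¬ α.Atomic ∧ (∀ a, α ≠ .box a) ∧ (∀ a, α ≠ .bbox a) ∧ (∀ a b, α ≠ .imp a b)

/-- Flags selecting the variant of the calculus:
`idFull`: unrestricted identity axiom (Id) vs atomic (Id_A);
`conF`: full formula contraction (Con_F) vs the restricted contractions
(Con_A), (Con_□), (Con_■), (Con_→);
`cut`: the single cut rule (Cut);
`mix`: the four cut-like rules (Mix_A), (Mix_□), (Mix_■), (Mix_→), (Cut_*). -/
structure Rules where
  idFull : Bool
  conF : Bool
  cut : Bool
  mix : Bool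

/-- `DerH R n Γ β`: the sequent Γ ⇒ β has a derivation of height at most `n`
in the calculus determined by `R`. -/
inductive DerH (R : Rules) : ℕ → FS → Fml → Prop
  -- (Id_A)
  | idA (n : ℕ) (α : Fml) : 1 ≤ n → α.Atomic → DerH R n (.fml α) α
  -- (Id), only in calculi with unrestricted identity
  | idF (n : ℕ) (α : Fml) : R.idFull = true → 1 ≤ n → DerH R n (.fml α) α
  -- (⊤)
  | topL (n : ℕ) (Γ : Ctx) (Δ : FS) (β : Fml) :
      DerH R n (Γ.plug (.fml .top)) β → DerH R (n + 1) (Γ.plug Δ) β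
  -- (⊥)
  | botL (n : ℕ) (Γ : Ctx) (Δ : FS) (β : Fml) :
      DerH R n Δ .bot → DerH R (n + 1) (Γ.plug Δ) β
  -- (∧L)
  | andL (n : ℕ) (Γ : Ctx) (α₁ α₂ β : Fml) :
      DerH R n (Γ.plug (.comma (.fml α₁) (.fml α₂))) β →
      DerH R (n + 1) (Γ.plug (.fml (α₁.and α₂))) β
  -- (∧R)
  | andR (n : ℕ) (Γ : FS) (β₁ β₂ : Fml) :
      DerH R n Γ β₁ → DerH R n Γ β₂ → DerH R (n + 1) Γ (β₁.and β₂)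
  -- (∨L)
  | orL (n : ℕ) (Γ : Ctx) (α₁ α₂ β : Fml) :
      DerH R n (Γ.plug (.fml α₁)) β → DerH R n (Γ.plug (.fml α₂)) β →
      DerH R (n + 1) (Γ.plug (.fml (α₁.or α₂))) β
  -- (∨R), i = 1
  | orR₁ (n : ℕ) (Γ : FS) (β₁ β₂ : Fml) :
      DerH R n Γ β₁ → DerH R (n + 1) Γ (β₁.or β₂)
  -- (∨R), i = 2
  | orR₂ (n : ℕ) (Γ : FS) (β₁ β₂ : Fml) :
      DerH R n Γ β₂ → DerH R (n + 1) Γ (β₁.or β₂)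
  -- (→L)
  | impL (n : ℕ) (Γ : Ctx) (Δ : FS) (α₁ α₂ β : Fml) :
      DerH R n Δ α₁ → DerH R n (Γ.plug (.fml α₂)) β →
      DerH R (n + 1) (Γ.plug (.comma Δ (.fml (α₁.imp α₂)))) β
  -- (→R)
  | impR (n : ℕ) (Γ : FS) (β₁ β₂ : Fml) :
      DerH R n (.comma (.fml β₁) Γ) β₂ → DerH R (n + 1) Γ (β₁.imp β₂)
  -- (◇L)
  | diaL (n : ℕ) (Γ : Ctx) (α β : Fml) :
      DerH R n (Γ.plug (.circ (.fml α))) β → DerH R (n + 1) (Γ.plug (.fml (α.dia))) β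
  -- (◇R)
  | diaR (n : ℕ) (Γ : FS) (β : Fml) :
      DerH R n Γ β → DerH R (n + 1) (.circ Γ) (β.dia)
  -- (◆L)
  | bdiaL (n : ℕ) (Γ : Ctx) (α β : Fml) :
      DerH R n (Γ.plug (.bullet (.fml α))) β → DerH R (n + 1) (Γ.plug (.fml (α.bdia))) β
  -- (◆R)
  | bdiaR (n : ℕ) (Γ : FS) (β : Fml) :
      DerH R n Γ β → DerH R (n + 1) (.bullet Γ) (β.bdia)
  -- (■L)
  | bboxL (n : ℕ) (Γ : Ctx) (α β : Fml) :
      DerH R n (Γ.plug (.fml α)) β → DerH R (n + 1) (Γ.plug (.circ (.fml (α.bbox)))) β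
  -- (■R)
  | bboxR (n : ℕ) (Γ : FS) (β : Fml) :
      DerH R n (.circ Γ) β → DerH R (n + 1) Γ (β.bbox)
  -- (□L)
  | boxL (n : ℕ) (Γ : Ctx) (α β : Fml) :
      DerH R n (Γ.plug (.fml α)) β → DerH R (n + 1) (Γ.plug (.bullet (.fml (α.box)))) β
  -- (□R)
  | boxR (n : ℕ) (Γ : FS) (β : Fml) :
      DerH R n (.bullet Γ) β → DerH R (n + 1) Γ (β.box)
  -- (Con∘)
  | conCirc (n : ℕ) (Γ : Ctx) (Δ₁ Δ₂ : FS) (β : Fml) :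
      DerH R n (Γ.plug (.comma (.circ Δ₁) (.circ Δ₂))) β →
      DerH R (n + 1) (Γ.plug (.circ (.comma Δ₁ Δ₂))) β
  -- (Con•)
  | conBullet (n : ℕ) (Γ : Ctx) (Δ₁ Δ₂ : FS) (β : Fml) :
      DerH R n (Γ.plug (.comma (.bullet Δ₁) (.bullet Δ₂))) β →
      DerH R (n + 1) (Γ.plug (.bullet (.comma Δ₁ Δ₂))) β
  -- (Con_F), only with full contraction
  | conF (n : ℕ) (Γ : Ctx) (α β : Fml) : R.conF = true →
      DerH R n (Γ.plug (.comma (.fml α) (.fml α))) β →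
      DerH R (n + 1) (Γ.plug (.fml α)) β
  -- (Con_A), only in the restricted calculi
  | conA (n : ℕ) (Γ : Ctx) (α β : Fml) : R.conF = false → α.Atomic →
      DerH R n (Γ.plug (.comma (.fml α) (.fml α))) β →
      DerH R (n + 1) (Γ.plug (.fml α)) β
  -- (Con_□)
  | conBox (n : ℕ) (Γ : Ctx) (α β : Fml) : R.conF = false →
      DerH R n (Γ.plug (.comma (.fml α.box) (.fml α.box))) β →
      DerH R (n + 1) (Γ.plug (.fml α.box)) β
  -- (Con_■)
  | conBBox (n : ℕ) (Γ : Ctx) (α β : Fml) : R.conF = false →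
      DerH R n (Γ.plug (.comma (.fml α.bbox) (.fml α.bbox))) β →
      DerH R (n + 1) (Γ.plug (.fml α.bbox)) β
  -- (Con_→)
  | conImp (n : ℕ) (Γ : Ctx) (α₁ α₂ β : Fml) : R.conF = false →
      DerH R n (Γ.plug (.comma (.fml (α₁.imp α₂)) (.fml (α₁.imp α₂)))) β →
      DerH R (n + 1) (Γ.plug (.fml (α₁.imp α₂))) β
  -- (Wk), i = 1
  | wk₁ (n : ℕ) (Γ : Ctx) (Δ₁ Δ₂ : FS) (β : Fml) :
      DerH R n (Γ.plug Δ₁) β → DerH R (n + 1) (Γ.plug (.comma Δ₁ Δ₂)) β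
  -- (Wk), i = 2
  | wk₂ (n : ℕ) (Γ : Ctx) (Δ₁ Δ₂ : FS) (β : Fml) :
      DerH R n (Γ.plug Δ₂) β → DerH R (n + 1) (Γ.plug (.comma Δ₁ Δ₂)) β
  -- (Ex)
  | ex (n : ℕ) (Γ : Ctx) (Δ₁ Δ₂ : FS) (β : Fml) :
      DerH R n (Γ.plug (.comma Δ₁ Δ₂)) β → DerH R (n + 1) (Γ.plug (.comma Δ₂ Δ₁)) β
  -- (Dual∘•)
  | dualCB (n : ℕ) (Γ : Ctx) (Δ₁ Δ₂ : FS) (β : Fml) :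
      DerH R n (.comma (.circ Δ₁) Δ₂) .bot →
      DerH R (n + 1) (Γ.plug (.comma Δ₁ (.bullet Δ₂))) β
  -- (Dual•∘)
  | dualBC (n : ℕ) (Γ : Ctx) (Δ₁ Δ₂ : FS) (β : Fml) :
      DerH R n (.comma (.bullet Δ₁) Δ₂) .bot →
      DerH R (n + 1) (Γ.plug (.comma Δ₁ (.circ Δ₂))) β
  -- (Cut)
  | cut (n : ℕ) (Γ : Ctx) (Δ : FS) (α β : Fml) : R.cut = true →
      DerH R n Δ α → DerH R n (Γ.plug (.fml α)) β → DerH R (n + 1) (Γ.plug Δ) β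
  -- (Mix_A)
  | mixA (n : ℕ) (Γ : MCtx) (Δ : FS) (α β : Fml) : R.mix = true →
      α.Atomic → 1 ≤ Γ.holes →
      DerH R n Δ α → DerH R n (Γ.plug (.fml α)) β → DerH R (n + 1) (Γ.plug Δ) β
  -- (Mix_□)
  | mixBox (n : ℕ) (Γ : MCtx) (Δ : FS) (α β : Fml) : R.mix = true →
      1 ≤ Γ.holes →
      DerH R n Δ α.box → DerH R n (Γ.plug (.fml α.box)) β → DerH R (n + 1) (Γ.plug Δ) β
  -- (Mix_■)
  | mixBBox (n : ℕ) (Γ : MCtx) (Δ : FS) (α β : Fml) : R.mix = true →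
      1 ≤ Γ.holes →
      DerH R n Δ α.bbox → DerH R n (Γ.plug (.fml α.bbox)) β → DerH R (n + 1) (Γ.plug Δ) β
  -- (Mix_→)
  | mixImp (n : ℕ) (Γ : MCtx) (Δ : FS) (α₁ α₂ β : Fml) : R.mix = true →
      1 ≤ Γ.holes →
      DerH R n Δ (α₁.imp α₂) → DerH R n (Γ.plug (.fml (α₁.imp α₂))) β →
      DerH R (n + 1) (Γ.plug Δ) β
  -- (Cut_*)
  | cutStar (n : ℕ) (Γ : Ctx) (Δ : FS) (α β : Fml) : R.mix = true →
      α.Starish →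
      DerH R n Δ α → DerH R n (Γ.plug (.fml α)) β → DerH R (n + 1) (Γ.plug Δ) β

/-- Derivability (some height). -/
def Der (R : Rules) (Γ : FS) (β : Fml) : Prop := ∃ n, DerH R n Γ β

/-- GwIKt: full identity, full contraction, with cut. -/
def GwIKt : Rules := ⟨true, true, true, false⟩
/-- GwIKt without the cut rule. -/
def GwIKtCF : Rules := ⟨true, true, false, false⟩
/-- GwIKt† : atomic identity, restricted contractions, with cut. -/
def GwIKtD : Rules := ⟨false, false, true, false⟩
/-- cut-free GwIKt†. -/
def GwIKtDCF : Rules := ⟨false, false, false, false⟩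
/-- GwIKt‡ : cut replaced by the four cut-like rules. -/
def GwIKtDD : Rules := ⟨false, false, false, true⟩

/-- Replacement of some occurrences of `◆α` (as formula leaves) by `•α`. -/
inductive RRel (α : Fml) : FS → FS → Prop
  | fml (γ : Fml) : RRel α (.fml γ) (.fml γ)
  | repl : RRel α (.fml α.bdia) (.bullet (.fml α))
  | comma {Δ₁ Δ₂ Δ₁' Δ₂' : FS} : RRel α Δ₁ Δ₁' → RRel α Δ₂ Δ₂' →
      RRel α (.comma Δ₁ Δ₂) (.comma Δ₁' Δ₂')
  | circ {Δ Δ' : FS} : RRel α Δ Δ' → RRel α (.circ Δ) (.circ Δ')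
  | bullet {Δ Δ' : FS} : RRel α Δ Δ' → RRel α (.bullet Δ) (.bullet Δ')

lemma RRel.rfl (α : Fml) : ∀ Δ : FS, RRel α Δ Δ
  | .fml γ => RRel.fml γ
  | .comma Δ₁ Δ₂ => RRel.comma (RRel.rfl α Δ₁) (RRel.rfl α Δ₂)
  | .circ Δ => RRel.circ (RRel.rfl α Δ)
  | .bullet Δ => RRel.bullet (RRel.rfl α Δ)

lemma RRel.ctx (α : Fml) : ∀ (C : Ctx) {Ξ Ξ' : FS}, RRel α Ξ Ξ' →
    RRel α (C.plug Ξ) (C.plug Ξ')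
  | .hole, _, _, h => h
  | .commaL C Γ, _, _, h => RRel.comma (RRel.ctx α C h) (RRel.rfl α Γ)
  | .commaR Γ C, _, _, h => RRel.comma (RRel.rfl α Γ) (RRel.ctx α C h)
  | .circ C, _, _, h => RRel.circ (RRel.ctx α C h)
  | .bullet C, _, _, h => RRel.bullet (RRel.ctx α C h)

/-- `C'` is obtained from `C` by pointwise replacement. -/
def CtxRRel (α : Fml) (C C' : Ctx) : Prop :=
  ∀ Ξ Ξ' : FS, RRel α Ξ Ξ' → RRel α (C.plug Ξ) (C'.plug Ξ')

lemma decomp (α : Fml) : ∀ (C : Ctx) (Δ T : FS), RRel α (C.plug Δ) T →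
    ∃ C' Δ', T = C'.plug Δ' ∧ RRel α Δ Δ' ∧ CtxRRel α C C' := by
  intro C
  induction C with
  | hole => intro Δ T h; exact ⟨.hole, T, rfl, h, fun _ _ h => h⟩
  | commaL C Γ ih =>
    intro Δ T h
    cases h with
    | comma h1 h2 =>
      obtain ⟨C', Δ', rfl, hΔ, hC⟩ := ih _ _ h1
      exact ⟨.commaL C' _, Δ', rfl, hΔ, fun _ _ hr => RRel.comma (hC _ _ hr) h2⟩
  | commaR Γ C ih =>
    intro Δ T h
    cases h with
    | comma h1 h2 =>
      obtain ⟨C', Δ', rfl, hΔ, hC⟩ := ih _ _ h2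
      exact ⟨.commaR _ C', Δ', rfl, hΔ, fun _ _ hr => RRel.comma h1 (hC _ _ hr)⟩
  | circ C ih =>
    intro Δ T h
    cases h with
    | circ h1 =>
      obtain ⟨C', Δ', rfl, hΔ, hC⟩ := ih _ _ h1
      exact ⟨.circ C', Δ', rfl, hΔ, fun _ _ hr => RRel.circ (hC _ _ hr)⟩
  | bullet C ih =>
    intro Δ T h
    cases h with
    | bullet h1 =>
      obtain ⟨C', Δ', rfl, hΔ, hC⟩ := ih _ _ h1
      exact ⟨.bullet C', Δ', rfl, hΔ, fun _ _ hr => RRel.bullet (hC _ _ hr)⟩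

lemma DerH.succ {R : Rules} {n : ℕ} {Γ : FS} {β : Fml}
    (h : DerH R n Γ β) : DerH R (n + 1) Γ β := by
  induction h with
  | idA n α h1 h2 => exact DerH.idA _ _ (le_trans h1 (Nat.le_succ _)) h2
  | idF n α hR h1 => exact DerH.idF _ _ hR (le_trans h1 (Nat.le_succ _))
  | topL _ _ _ _ _ ih => exact DerH.topL _ _ _ _ ih
  | botL _ _ _ _ _ ih => exact DerH.botL _ _ _ _ ih
  | andL _ _ _ _ _ _ ih => exact DerH.andL _ _ _ _ _ ih
  | andR _ _ _ _ _ _ ih1 ih2 => exact DerH.andR _ _ _ _ ih1 ih2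
  | orL _ _ _ _ _ _ _ ih1 ih2 => exact DerH.orL _ _ _ _ _ ih1 ih2
  | orR₁ _ _ _ _ _ ih => exact DerH.orR₁ _ _ _ _ ih
  | orR₂ _ _ _ _ _ ih => exact DerH.orR₂ _ _ _ _ ih
  | impL _ _ _ _ _ _ _ _ ih1 ih2 => exact DerH.impL _ _ _ _ _ _ ih1 ih2
  | impR _ _ _ _ _ ih => exact DerH.impR _ _ _ _ ih
  | diaL _ _ _ _ _ ih => exact DerH.diaL _ _ _ _ ih
  | diaR _ _ _ _ ih => exact DerH.diaR _ _ _ ih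
  | bdiaL _ _ _ _ _ ih => exact DerH.bdiaL _ _ _ _ ih
  | bdiaR _ _ _ _ ih => exact DerH.bdiaR _ _ _ ih
  | bboxL _ _ _ _ _ ih => exact DerH.bboxL _ _ _ _ ih
  | bboxR _ _ _ _ ih => exact DerH.bboxR _ _ _ ih
  | boxL _ _ _ _ _ ih => exact DerH.boxL _ _ _ _ ih
  | boxR _ _ _ _ ih => exact DerH.boxR _ _ _ ih
  | conCirc _ _ _ _ _ _ ih => exact DerH.conCirc _ _ _ _ _ ih
  | conBullet _ _ _ _ _ _ ih => exact DerH.conBullet _ _ _ _ _ ih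
  | conF _ _ _ _ hR _ ih => exact DerH.conF _ _ _ _ hR ih
  | conA _ _ _ _ hR hA _ ih => exact DerH.conA _ _ _ _ hR hA ih
  | conBox _ _ _ _ hR _ ih => exact DerH.conBox _ _ _ _ hR ih
  | conBBox _ _ _ _ hR _ ih => exact DerH.conBBox _ _ _ _ hR ih
  | conImp _ _ _ _ _ hR _ ih => exact DerH.conImp _ _ _ _ _ hR ih
  | wk₁ _ _ _ _ _ _ ih => exact DerH.wk₁ _ _ _ _ _ ih
  | wk₂ _ _ _ _ _ _ ih => exact DerH.wk₂ _ _ _ _ _ ih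
  | ex _ _ _ _ _ _ ih => exact DerH.ex _ _ _ _ _ ih
  | dualCB _ _ _ _ _ _ ih => exact DerH.dualCB _ _ _ _ _ ih
  | dualBC _ _ _ _ _ _ ih => exact DerH.dualBC _ _ _ _ _ ih
  | cut _ _ _ _ _ hR _ _ ih1 ih2 => exact DerH.cut _ _ _ _ _ hR ih1 ih2
  | mixA _ _ _ _ _ hR hA hH _ _ ih1 ih2 => exact DerH.mixA _ _ _ _ _ hR hA hH ih1 ih2
  | mixBox _ _ _ _ _ hR hH _ _ ih1 ih2 => exact DerH.mixBox _ _ _ _ _ hR hH ih1 ih2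
  | mixBBox _ _ _ _ _ hR hH _ _ ih1 ih2 => exact DerH.mixBBox _ _ _ _ _ hR hH ih1 ih2
  | mixImp _ _ _ _ _ _ hR hH _ _ ih1 ih2 => exact DerH.mixImp _ _ _ _ _ _ hR hH ih1 ih2
  | cutStar _ _ _ _ _ hR hS _ _ ih1 ih2 => exact DerH.cutStar _ _ _ _ _ hR hS ih1 ih2

lemma main_repl (α : Fml) : ∀ (n : ℕ) (S : FS) (β : Fml), DerH GwIKtDCF n S β →
    ∀ S', RRel α S S' → DerH GwIKtDCF n S' β := by
  intro n S β h
  induction h with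
  | idA n γ h1 hA =>
    intro S' hr
    cases hr with
    | fml => exact DerH.idA _ _ h1 hA
    | repl => exact hA.elim
  | idF n γ hR h1 => simp [GwIKtDCF] at hR
  | topL n Γ Δ β hp ih =>
    intro S' hr
    obtain ⟨C', Δ', rfl, hΔ, hC⟩ := decomp α Γ Δ S' hr
    exact DerH.topL n C' Δ' β (ih _ (hC _ _ (RRel.fml _)))
  | botL n Γ Δ β hp ih =>
    intro S' hr
    obtain ⟨C', Δ', rfl, hΔ, hC⟩ := decomp α Γ Δ S' hr
    exact DerH.botL n C' Δ' β (ih _ hΔ)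
  | andL n Γ α₁ α₂ β hp ih =>
    intro S' hr
    obtain ⟨C', Δ', rfl, hΔ, hC⟩ := decomp α Γ _ S' hr
    cases hΔ with
    | fml => exact DerH.andL n C' α₁ α₂ β (ih _ (hC _ _ (RRel.comma (RRel.fml _) (RRel.fml _))))
  | andR n Γ β₁ β₂ h1 h2 ih1 ih2 =>
    intro S' hr
    exact DerH.andR n S' β₁ β₂ (ih1 _ hr) (ih2 _ hr)
  | orL n Γ α₁ α₂ β h1 h2 ih1 ih2 =>
    intro S' hr
    obtain ⟨C', Δ', rfl, hΔ, hC⟩ := decomp α Γ _ S' hr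
    cases hΔ with
    | fml => exact DerH.orL n C' α₁ α₂ β (ih1 _ (hC _ _ (RRel.fml _))) (ih2 _ (hC _ _ (RRel.fml _)))
  | orR₁ n Γ β₁ β₂ h1 ih =>
    intro S' hr; exact DerH.orR₁ n S' β₁ β₂ (ih _ hr)
  | orR₂ n Γ β₁ β₂ h1 ih =>
    intro S' hr; exact DerH.orR₂ n S' β₁ β₂ (ih _ hr)
  | impL n Γ Δ α₁ α₂ β h1 h2 ih1 ih2 =>
    intro S' hr
    obtain ⟨C', Δ', rfl, hΔ, hC⟩ := decomp α Γ _ S' hr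
    cases hΔ with
    | comma hΔ1 hΔ2 =>
      cases hΔ2 with
      | fml => exact DerH.impL n C' _ α₁ α₂ β (ih1 _ hΔ1) (ih2 _ (hC _ _ (RRel.fml _)))
  | impR n Γ β₁ β₂ h1 ih =>
    intro S' hr
    exact DerH.impR n S' β₁ β₂ (ih _ (RRel.comma (RRel.fml _) hr))
  | diaL n Γ α₀ β hp ih =>
    intro S' hr
    obtain ⟨C', Δ', rfl, hΔ, hC⟩ := decomp α Γ _ S' hr
    cases hΔ with
    | fml => exact DerH.diaL n C' α₀ β (ih _ (hC _ _ (RRel.circ (RRel.fml _))))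
  | diaR n Γ β hp ih =>
    intro S' hr
    cases hr with
    | circ h1 => exact DerH.diaR n _ β (ih _ h1)
  | bdiaL n Γ α₀ β hp ih =>
    intro S' hr
    obtain ⟨C', Δ', rfl, hΔ, hC⟩ := decomp α Γ _ S' hr
    cases hΔ with
    | fml => exact DerH.bdiaL n C' α₀ β (ih _ (hC _ _ (RRel.bullet (RRel.fml _))))
    | repl => exact (ih _ (hC _ _ (RRel.bullet (RRel.fml _)))).succ
  | bdiaR n Γ β hp ih =>
    intro S' hr
    cases hr with
    | bullet h1 => exact DerH.bdiaR n _ β (ih _ h1)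
  | bboxL n Γ α₀ β hp ih =>
    intro S' hr
    obtain ⟨C', Δ', rfl, hΔ, hC⟩ := decomp α Γ _ S' hr
    cases hΔ with
    | circ h1 =>
      cases h1 with
      | fml => exact DerH.bboxL n C' α₀ β (ih _ (hC _ _ (RRel.fml _)))
  | bboxR n Γ β hp ih =>
    intro S' hr
    exact DerH.bboxR n S' β (ih _ (RRel.circ hr))
  | boxL n Γ α₀ β hp ih =>
    intro S' hr
    obtain ⟨C', Δ', rfl, hΔ, hC⟩ := decomp α Γ _ S' hr
    cases hΔ with
    | bullet h1 =>
      cases h1 with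
      | fml => exact DerH.boxL n C' α₀ β (ih _ (hC _ _ (RRel.fml _)))
  | boxR n Γ β hp ih =>
    intro S' hr
    exact DerH.boxR n S' β (ih _ (RRel.bullet hr))
  | conCirc n Γ Δ₁ Δ₂ β hp ih =>
    intro S' hr
    obtain ⟨C', Δ', rfl, hΔ, hC⟩ := decomp α Γ _ S' hr
    cases hΔ with
    | circ h1 =>
      cases h1 with
      | comma h2 h3 =>
        exact DerH.conCirc n C' _ _ β (ih _ (hC _ _ (RRel.comma (RRel.circ h2) (RRel.circ h3))))
  | conBullet n Γ Δ₁ Δ₂ β hp ih =>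
    intro S' hr
    obtain ⟨C', Δ', rfl, hΔ, hC⟩ := decomp α Γ _ S' hr
    cases hΔ with
    | bullet h1 =>
      cases h1 with
      | comma h2 h3 =>
        exact DerH.conBullet n C' _ _ β (ih _ (hC _ _ (RRel.comma (RRel.bullet h2) (RRel.bullet h3))))
  | conF n Γ α₀ β hR hp ih => simp [GwIKtDCF] at hR
  | conA n Γ α₀ β hR hA hp ih =>
    intro S' hr
    obtain ⟨C', Δ', rfl, hΔ, hC⟩ := decomp α Γ _ S' hr
    cases hΔ with
    | fml => exact DerH.conA n C' α₀ β hR hA (ih _ (hC _ _ (RRel.comma (RRel.fml _) (RRel.fml _))))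
    | repl => exact hA.elim
  | conBox n Γ α₀ β hR hp ih =>
    intro S' hr
    obtain ⟨C', Δ', rfl, hΔ, hC⟩ := decomp α Γ _ S' hr
    cases hΔ with
    | fml => exact DerH.conBox n C' α₀ β hR (ih _ (hC _ _ (RRel.comma (RRel.fml _) (RRel.fml _))))
  | conBBox n Γ α₀ β hR hp ih =>
    intro S' hr
    obtain ⟨C', Δ', rfl, hΔ, hC⟩ := decomp α Γ _ S' hr
    cases hΔ with
    | fml => exact DerH.conBBox n C' α₀ β hR (ih _ (hC _ _ (RRel.comma (RRel.fml _) (RRel.fml _))))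
  | conImp n Γ α₁ α₂ β hR hp ih =>
    intro S' hr
    obtain ⟨C', Δ', rfl, hΔ, hC⟩ := decomp α Γ _ S' hr
    cases hΔ with
    | fml => exact DerH.conImp n C' α₁ α₂ β hR (ih _ (hC _ _ (RRel.comma (RRel.fml _) (RRel.fml _))))
  | wk₁ n Γ Δ₁ Δ₂ β hp ih =>
    intro S' hr
    obtain ⟨C', Δ', rfl, hΔ, hC⟩ := decomp α Γ _ S' hr
    cases hΔ with
    | comma h1 h2 => exact DerH.wk₁ n C' _ _ β (ih _ (hC _ _ h1))
  | wk₂ n Γ Δ₁ Δ₂ β hp ih =>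
    intro S' hr
    obtain ⟨C', Δ', rfl, hΔ, hC⟩ := decomp α Γ _ S' hr
    cases hΔ with
    | comma h1 h2 => exact DerH.wk₂ n C' _ _ β (ih _ (hC _ _ h2))
  | ex n Γ Δ₁ Δ₂ β hp ih =>
    intro S' hr
    obtain ⟨C', Δ', rfl, hΔ, hC⟩ := decomp α Γ _ S' hr
    cases hΔ with
    | comma h1 h2 => exact DerH.ex n C' _ _ β (ih _ (hC _ _ (RRel.comma h2 h1)))
  | dualCB n Γ Δ₁ Δ₂ β hp ih =>
    intro S' hr
    obtain ⟨C', Δ', rfl, hΔ, hC⟩ := decomp α Γ _ S' hr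
    cases hΔ with
    | comma h1 h2 =>
      cases h2 with
      | bullet h3 => exact DerH.dualCB n C' _ _ β (ih _ (RRel.comma (RRel.circ h1) h3))
  | dualBC n Γ Δ₁ Δ₂ β hp ih =>
    intro S' hr
    obtain ⟨C', Δ', rfl, hΔ, hC⟩ := decomp α Γ _ S' hr
    cases hΔ with
    | comma h1 h2 =>
      cases h2 with
      | circ h3 => exact DerH.dualBC n C' _ _ β (ih _ (RRel.comma (RRel.bullet h1) h3))
  | cut _ _ _ _ _ hR => simp [GwIKtDCF] at hR
  | mixA _ _ _ _ _ hR => simp [GwIKtDCF] at hR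
  | mixBox _ _ _ _ _ hR => simp [GwIKtDCF] at hR
  | mixBBox _ _ _ _ _ hR => simp [GwIKtDCF] at hR
  | mixImp _ _ _ _ _ _ hR => simp [GwIKtDCF] at hR
  | cutStar _ _ _ _ _ hR => simp [GwIKtDCF] at hR

/-- height-preserving invertibility of (◆L) in cut-free GwIKt†. -/
theorem stmt4_bdiaL_invertible :
    ∀ n : ℕ, 1 ≤ n → ∀ (Γ : Ctx) (α β : Fml),
      DerH GwIKtDCF n (Γ.plug (.fml α.bdia)) β →
      DerH GwIKtDCF n (Γ.plug (.bullet (.fml α))) β := by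
  intro n _ Γ α β h
  exact main_repl α n _ β h _ (RRel.ctx α Γ RRel.repl)
end

section
/- In the cut-free calculus GwIKt†, the right black-box rule is height-preserving invertible: for all n ≥ 1, if Γ ⇒ ■β is derivable with height n, then ∘Γ ⇒ β is derivable with height at most n. -/
lemma derH_succ {R : Rules} : ∀ {n Γ β}, DerH R n Γ β → DerH R (n+1) Γ β := by
  intro n Γ β h
  induction h with
  | idA n α h1 h2 => exact .idA _ α (by omega) h2
  | idF n α hf h1 => exact .idF _ α hf (by omega)
  | topL n Γ Δ β _ ih => exact .topL _ Γ Δ β ih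
  | botL n Γ Δ β _ ih => exact .botL _ Γ Δ β ih
  | andL n Γ α₁ α₂ β _ ih => exact .andL _ Γ α₁ α₂ β ih
  | andR n Γ β₁ β₂ _ _ ih1 ih2 => exact .andR _ Γ β₁ β₂ ih1 ih2
  | orL n Γ α₁ α₂ β _ _ ih1 ih2 => exact .orL _ Γ α₁ α₂ β ih1 ih2
  | orR₁ n Γ β₁ β₂ _ ih => exact .orR₁ _ Γ β₁ β₂ ih
  | orR₂ n Γ β₁ β₂ _ ih => exact .orR₂ _ Γ β₁ β₂ ih
  | impL n Γ Δ α₁ α₂ β _ _ ih1 ih2 => exact .impL _ Γ Δ α₁ α₂ β ih1 ih2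
  | impR n Γ β₁ β₂ _ ih => exact .impR _ Γ β₁ β₂ ih
  | diaL n Γ α β _ ih => exact .diaL _ Γ α β ih
  | diaR n Γ β _ ih => exact .diaR _ Γ β ih
  | bdiaL n Γ α β _ ih => exact .bdiaL _ Γ α β ih
  | bdiaR n Γ β _ ih => exact .bdiaR _ Γ β ih
  | bboxL n Γ α β _ ih => exact .bboxL _ Γ α β ih
  | bboxR n Γ β _ ih => exact .bboxR _ Γ β ih
  | boxL n Γ α β _ ih => exact .boxL _ Γ α β ih
  | boxR n Γ β _ ih => exact .boxR _ Γ β ih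
  | conCirc n Γ Δ₁ Δ₂ β _ ih => exact .conCirc _ Γ Δ₁ Δ₂ β ih
  | conBullet n Γ Δ₁ Δ₂ β _ ih => exact .conBullet _ Γ Δ₁ Δ₂ β ih
  | conF n Γ α β hf _ ih => exact .conF _ Γ α β hf ih
  | conA n Γ α β hf ha _ ih => exact .conA _ Γ α β hf ha ih
  | conBox n Γ α β hf _ ih => exact .conBox _ Γ α β hf ih
  | conBBox n Γ α β hf _ ih => exact .conBBox _ Γ α β hf ih
  | conImp n Γ α₁ α₂ β hf _ ih => exact .conImp _ Γ α₁ α₂ β hf ih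
  | wk₁ n Γ Δ₁ Δ₂ β _ ih => exact .wk₁ _ Γ Δ₁ Δ₂ β ih
  | wk₂ n Γ Δ₁ Δ₂ β _ ih => exact .wk₂ _ Γ Δ₁ Δ₂ β ih
  | ex n Γ Δ₁ Δ₂ β _ ih => exact .ex _ Γ Δ₁ Δ₂ β ih
  | dualCB n Γ Δ₁ Δ₂ β _ ih => exact .dualCB _ Γ Δ₁ Δ₂ β ih
  | dualBC n Γ Δ₁ Δ₂ β _ ih => exact .dualBC _ Γ Δ₁ Δ₂ β ih
  | cut n Γ Δ α β hc _ _ ih1 ih2 => exact .cut _ Γ Δ α β hc ih1 ih2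
  | mixA n Γ Δ α β hm ha hh _ _ ih1 ih2 => exact .mixA _ Γ Δ α β hm ha hh ih1 ih2
  | mixBox n Γ Δ α β hm hh _ _ ih1 ih2 => exact .mixBox _ Γ Δ α β hm hh ih1 ih2
  | mixBBox n Γ Δ α β hm hh _ _ ih1 ih2 => exact .mixBBox _ Γ Δ α β hm hh ih1 ih2
  | mixImp n Γ Δ α₁ α₂ β hm hh _ _ ih1 ih2 => exact .mixImp _ Γ Δ α₁ α₂ β hm hh ih1 ih2
  | cutStar n Γ Δ α β hm hs _ _ ih1 ih2 => exact .cutStar _ Γ Δ α β hm hs ih1 ih2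

lemma inv_bboxR {n : ℕ} {Γ : FS} {δ : Fml} (h : DerH GwIKtDCF n Γ δ) :
    ∀ β : Fml, δ = Fml.bbox β → DerH GwIKtDCF n (.circ Γ) β := by
  induction h with
  | idA n α h1 h2 => intro β hβ; subst hβ; exact absurd h2 (by simp [Fml.Atomic])
  | idF n α hf h1 => simp [GwIKtDCF] at hf
  | topL n Γ Δ β _ ih => intro b hb; exact .topL n (Ctx.circ Γ) Δ b (ih b hb)
  | botL n Γ Δ β h _ => intro b hb; exact .botL n (Ctx.circ Γ) Δ b h
  | andL n Γ α₁ α₂ β _ ih => intro b hb; exact .andL n (Ctx.circ Γ) α₁ α₂ b (ih b hb)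
  | andR n Γ β₁ β₂ _ _ _ _ => intro b hb; cases hb
  | orL n Γ α₁ α₂ β _ _ ih1 ih2 =>
      intro b hb; exact .orL n (Ctx.circ Γ) α₁ α₂ b (ih1 b hb) (ih2 b hb)
  | orR₁ n Γ β₁ β₂ _ _ => intro b hb; cases hb
  | orR₂ n Γ β₁ β₂ _ _ => intro b hb; cases hb
  | impL n Γ Δ α₁ α₂ β h1 _ _ ih2 =>
      intro b hb; exact .impL n (Ctx.circ Γ) Δ α₁ α₂ b h1 (ih2 b hb)
  | impR n Γ β₁ β₂ _ _ => intro b hb; cases hb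
  | diaL n Γ α β _ ih => intro b hb; exact .diaL n (Ctx.circ Γ) α b (ih b hb)
  | diaR n Γ β _ _ => intro b hb; cases hb
  | bdiaL n Γ α β _ ih => intro b hb; exact .bdiaL n (Ctx.circ Γ) α b (ih b hb)
  | bdiaR n Γ β _ _ => intro b hb; cases hb
  | bboxL n Γ α β _ ih => intro b hb; exact .bboxL n (Ctx.circ Γ) α b (ih b hb)
  | bboxR n Γ β h _ =>
      intro b hb; injection hb with hb; subst hb; exact derH_succ h
  | boxL n Γ α β _ ih => intro b hb; exact .boxL n (Ctx.circ Γ) α b (ih b hb)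
  | boxR n Γ β _ _ => intro b hb; cases hb
  | conCirc n Γ Δ₁ Δ₂ β _ ih => intro b hb; exact .conCirc n (Ctx.circ Γ) Δ₁ Δ₂ b (ih b hb)
  | conBullet n Γ Δ₁ Δ₂ β _ ih => intro b hb; exact .conBullet n (Ctx.circ Γ) Δ₁ Δ₂ b (ih b hb)
  | conF n Γ α β hf _ _ => simp [GwIKtDCF] at hf
  | conA n Γ α β hf ha _ ih => intro b hb; exact .conA n (Ctx.circ Γ) α b hf ha (ih b hb)
  | conBox n Γ α β hf _ ih => intro b hb; exact .conBox n (Ctx.circ Γ) α b hf (ih b hb)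
  | conBBox n Γ α β hf _ ih => intro b hb; exact .conBBox n (Ctx.circ Γ) α b hf (ih b hb)
  | conImp n Γ α₁ α₂ β hf _ ih => intro b hb; exact .conImp n (Ctx.circ Γ) α₁ α₂ b hf (ih b hb)
  | wk₁ n Γ Δ₁ Δ₂ β _ ih => intro b hb; exact .wk₁ n (Ctx.circ Γ) Δ₁ Δ₂ b (ih b hb)
  | wk₂ n Γ Δ₁ Δ₂ β _ ih => intro b hb; exact .wk₂ n (Ctx.circ Γ) Δ₁ Δ₂ b (ih b hb)
  | ex n Γ Δ₁ Δ₂ β _ ih => intro b hb; exact .ex n (Ctx.circ Γ) Δ₁ Δ₂ b (ih b hb)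
  | dualCB n Γ Δ₁ Δ₂ β h _ => intro b hb; exact .dualCB n (Ctx.circ Γ) Δ₁ Δ₂ b h
  | dualBC n Γ Δ₁ Δ₂ β h _ => intro b hb; exact .dualBC n (Ctx.circ Γ) Δ₁ Δ₂ b h
  | cut n Γ Δ α β hc _ _ _ _ => simp [GwIKtDCF] at hc
  | mixA n Γ Δ α β hm _ _ _ _ _ _ => simp [GwIKtDCF] at hm
  | mixBox n Γ Δ α β hm _ _ _ _ _ => simp [GwIKtDCF] at hm
  | mixBBox n Γ Δ α β hm _ _ _ _ _ => simp [GwIKtDCF] at hm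
  | mixImp n Γ Δ α₁ α₂ β hm _ _ _ _ _ => simp [GwIKtDCF] at hm
  | cutStar n Γ Δ α β hm _ _ _ _ _ => simp [GwIKtDCF] at hm

/-- height-preserving invertibility of (■R) in cut-free GwIKt†. -/
theorem stmt10_bboxR_invertible :
    ∀ n : ℕ, 1 ≤ n → ∀ (Γ : FS) (β : Fml),
      DerH GwIKtDCF n Γ β.bbox → DerH GwIKtDCF n (.circ Γ) β := by
  intro n _ Γ β h
  exact inv_bboxR h β rfl
end
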